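/- Let Γ be a property with convex level sets on distributions over a finite outcome set Y, and let f be a distributional predictor with finitely many distinct prediction values that is perfectly distribution calibrated with respect to Γ (for every γ in the image of Γ∘f and every y ∈ Y, the conditional probability of Y=y given Γ∘f(X)=γ equals the conditional expectation of f_y(X) given Γ∘f(X)=γ). Then Γ∘f is Γ-calibrated: for every γ in the image of Γ∘f, Γ applied to the conditional distribution of Y given Γ∘f(X)=γ equals γ. -/

import Mathlib

open MeasureTheory ProbabilityTheory

/-- Perfect distribution calibration w.r.t. Γ (with convex level sets)
implies Γ-calibration of Γ∘f. -/
theorem distribution_calibration_implies_gamma_calibration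
    {X Y R : Type*} [MeasurableSpace X] [MeasurableSpace Y] [Fintype Y]
    (μ : Measure (X × Y)) [IsProbabilityMeasure μ]
    (f : X → Y → ℝ) (hf : ∀ x, f x ∈ stdSimplex ℝ Y) (hfin : (Set.range f).Finite)
    (Γ : (Y → ℝ) → R)
    (hconv : ∀ γ : R, Convex ℝ {p | p ∈ stdSimplex ℝ Y ∧ Γ p = γ})
    (hpos : ∀ γ ∈ Set.range (fun x => Γ (f x)), μ {z | Γ (f z.1) = γ} ≠ 0)
    (hcal : ∀ γ ∈ Set.range (fun x => Γ (f x)), ∀ y : Y,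
      (μ[|{z | Γ (f z.1) = γ}] (Prod.snd ⁻¹' {y})).toReal =
        ∫ z, f z.1 y ∂(μ[|{z | Γ (f z.1) = γ}])) :
    ∀ γ ∈ Set.range (fun x => Γ (f x)),
      Γ (fun y => (μ[|{z | Γ (f z.1) = γ}] (Prod.snd ⁻¹' {y})).toReal) = γ := by
  classical
  intro γ hγ
  obtain ⟨x₀, hx₀⟩ := hγ
  set A : Set (X × Y) := {z | Γ (f z.1) = γ} with hA
  set ν : Measure (X × Y) := μ[|A] with hν
  have hμA : μ A ≠ 0 := hpos γ ⟨x₀, hx₀⟩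
  have hμA' : μ A ≠ ⊤ := measure_ne_top μ A
  have hν_apply : ∀ t : Set (X × Y), ν t = (μ A)⁻¹ * (μ.restrict A) t := by
    intro t
    rw [hν, ProbabilityTheory.cond, Measure.smul_apply, smul_eq_mul]
  have hνuniv : ν Set.univ = 1 := by
    rw [hν_apply, Measure.restrict_apply_univ, ENNReal.inv_mul_cancel hμA hμA']
  haveI : IsProbabilityMeasure ν := ⟨hνuniv⟩
  set g : Y → (X × Y) → ℝ := fun y z => f z.1 y with hg
  have hg0 : ∀ y z, 0 ≤ g y z := fun y z => (hf z.1).1 y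
  have hgsum : ∀ z, ∑ y, g y z = 1 := fun z => (hf z.1).2
  have hg1 : ∀ y z, g y z ≤ 1 := by
    intro y z
    calc g y z ≤ ∑ y', g y' z :=
      Finset.single_le_sum (fun y' _ => hg0 y' z) (Finset.mem_univ y)
    _ = 1 := hgsum z
  set p : Y → ℝ := fun y => (ν (Prod.snd ⁻¹' {y})).toReal with hp
  have hc : ∀ y, p y = ∫ z, g y z ∂ν := fun y => hcal γ ⟨x₀, hx₀⟩ y
  -- p y nonneg
  have hpnn : ∀ y, 0 ≤ p y := fun y => ENNReal.toReal_nonneg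
  -- sum of p ≥ 1
  have hsum_ge : 1 ≤ ∑ y, p y := by
    have hcup : (⋃ y : Y, Prod.snd ⁻¹' {y} : Set (X × Y)) = Set.univ := by
      ext z; simp
    have h1 : (1 : ENNReal) ≤ ∑ y, ν (Prod.snd ⁻¹' {y}) := by
      rw [← hνuniv, ← hcup]
      exact measure_iUnion_fintype_le ν _
    have h2 : (∑ y, ν (Prod.snd ⁻¹' {y})).toReal = ∑ y, p y := by
      rw [hp]
      exact ENNReal.toReal_sum (fun y _ => measure_ne_top ν _)
    have h3 : (1 : ENNReal).toReal ≤ (∑ y, ν (Prod.snd ⁻¹' {y})).toReal := by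
      apply ENNReal.toReal_mono _ h1
      exact ENNReal.sum_ne_top.mpr (fun y _ => measure_ne_top ν _)
    simpa [h2] using h3
  -- Step A: all g y are AEStronglyMeasurable
  have key : ∀ y, AEStronglyMeasurable (g y) ν := by
    by_contra hcon
    push_neg at hcon
    obtain ⟨y₀, hy₀⟩ := hcon
    set T : Finset Y := Finset.univ.filter (fun y => AEStronglyMeasurable (g y) ν) with hT
    have hy₀T : y₀ ∉ T := by simp [hT, hy₀]
    have hint : ∀ y ∈ T, Integrable (g y) ν := by
      intro y hy
      refine (integrable_const (1:ℝ)).mono' ?_ ?_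
      · exact (Finset.mem_filter.mp hy).2
      · exact Filter.Eventually.of_forall fun z => by
          rw [Real.norm_eq_abs, abs_of_nonneg (hg0 y z)]; exact hg1 y z
    have h0 : ∀ y ∉ T, p y = 0 := by
      intro y hy
      have hni : ¬ Integrable (g y) ν := fun hI =>
        hy (Finset.mem_filter.mpr ⟨Finset.mem_univ _, hI.1⟩)
      rw [hc y, integral_undef hni]
    -- sum over T of integrals
    have hintsum : Integrable (fun z => ∑ y ∈ T, g y z) ν := integrable_finset_sum T hint
    have hsle : ∀ z, ∑ y ∈ T, g y z ≤ 1 := by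
      intro z
      have h := Finset.sum_le_sum_of_subset_of_nonneg (Finset.subset_univ T)
        (fun y (_ : y ∈ Finset.univ) (_ : y ∉ T) => hg0 y z)
      exact le_trans h (le_of_eq (hgsum z))
    have hTsum : ∑ y ∈ T, p y = ∫ z, (∑ y ∈ T, g y z) ∂ν := by
      rw [Finset.sum_congr rfl (fun y _ => hc y)]
      exact (integral_finset_sum T hint).symm
    have hle1 : ∫ z, (∑ y ∈ T, g y z) ∂ν ≤ 1 := by
      calc ∫ z, (∑ y ∈ T, g y z) ∂ν ≤ ∫ _, (1:ℝ) ∂ν :=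
        integral_mono hintsum (integrable_const 1) hsle
      _ = 1 := by simp
    have hsum_le : ∑ y, p y ≤ 1 := by
      have : ∑ y, p y = ∑ y ∈ T, p y := by
        rw [← Finset.sum_subset (Finset.subset_univ T)]
        intro y _ hy
        exact h0 y hy
      rw [this, hTsum]; exact hle1
    have heq : ∫ z, (∑ y ∈ T, g y z) ∂ν = 1 := by
      refine le_antisymm hle1 ?_
      calc (1:ℝ) ≤ ∑ y, p y := hsum_ge
      _ = ∑ y ∈ T, p y := by
        rw [← Finset.sum_subset (Finset.subset_univ T)]
        intro y _ hy; exact h0 y hy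
      _ = _ := hTsum
    -- 1 - sum is nonneg with integral 0
    have hzero : ∫ z, ((1:ℝ) - ∑ y ∈ T, g y z) ∂ν = 0 := by
      rw [integral_sub (integrable_const 1) hintsum, heq]
      simp
    have hae : (fun z => (1:ℝ) - ∑ y ∈ T, g y z) =ᵐ[ν] 0 := by
      rw [← integral_eq_zero_iff_of_nonneg]
      · exact hzero
      · intro z; simp only [Pi.zero_apply, sub_nonneg]; exact hsle z
      · exact (integrable_const 1).sub hintsum
    have hae2 : g y₀ =ᵐ[ν] 0 := by
      filter_upwards [hae] with z hz
      simp only [Pi.zero_apply] at hz ⊢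
      have hsz : ∑ y ∈ T, g y z = 1 := by linarith
      have : ∑ y ∈ Finset.univ \ T, g y z = 0 := by
        have := Finset.sum_sdiff_eq_sub (Finset.subset_univ T) (f := fun y => g y z)
        rw [hgsum z, hsz] at this
        linarith
      have hy₀mem : y₀ ∈ Finset.univ \ T := Finset.mem_sdiff.mpr ⟨Finset.mem_univ _, hy₀T⟩
      have := (Finset.sum_eq_zero_iff_of_nonneg (fun y _ => hg0 y z)).mp this y₀ hy₀mem
      exact this
    exact hy₀ (aestronglyMeasurable_const.congr hae2.symm)
  -- Step B: measurable versions
  have keyae : ∀ y, AEMeasurable (g y) ν := fun y => (key y).aemeasurable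
  set G : Y → (X × Y) → ℝ := fun y => (keyae y).mk (g y) with hG
  have hGmeas : ∀ y, Measurable (G y) := fun y => (keyae y).measurable_mk
  have hGeq : ∀ᵐ z ∂ν, ∀ y, g y z = G y z :=
    (MeasureTheory.ae_all_iff).mpr fun y => (keyae y).ae_eq_mk
  set F' : (X × Y) → (Y → ℝ) := fun z y => G y z with hF'
  have hF'meas : Measurable F' := measurable_pi_lambda _ hGmeas
  set V : Finset (Y → ℝ) := hfin.toFinset.filter (fun v => Γ v = γ) with hV
  have hmemV : ∀ v, v ∈ V ↔ (v ∈ Set.range f ∧ Γ v = γ) := by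
    intro v; simp [hV, Set.Finite.mem_toFinset]
  -- null measurability of A
  set S : (Y → ℝ) → Set (X × Y) := fun v => {z | F' z = v} with hS
  have hSmeas : ∀ v, MeasurableSet (S v) :=
    fun v => hF'meas (measurableSet_singleton v)
  have hAae : ∀ v : Y → ℝ, {z | f z.1 = v} =ᵐ[ν] S v := by
    intro v
    rw [Filter.eventuallyEq_set]
    filter_upwards [hGeq] with z hz
    simp only [hS, Set.mem_setOf_eq]
    have hfe : f z.1 = F' z := by funext y; exact hz y
    constructor
    · intro h; rw [← hfe]; exact h
    · intro h; rw [hfe]; exact h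
  have hAeq : A = ⋃ v ∈ V, {z | f z.1 = v} := by
    ext z
    simp only [Set.mem_setOf_eq, Set.mem_iUnion, hA]
    constructor
    · intro h
      exact ⟨f z.1, (hmemV _).mpr ⟨⟨z.1, rfl⟩, h⟩, rfl⟩
    · rintro ⟨v, hv, hzv⟩
      rw [hzv]; exact ((hmemV v).mp hv).2
  have hAnm : NullMeasurableSet A ν := by
    rw [hAeq]
    apply NullMeasurableSet.biUnion (V.countable_toSet)
    intro v _
    exact (hSmeas v).nullMeasurableSet.congr (hAae v).symm
  have hνA : ν A = 1 := by
    rw [hν_apply, Measure.restrict_apply_self, ENNReal.inv_mul_cancel hμA hμA']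
  have hνAc : ν Aᶜ = 0 := by
    rw [measure_compl₀ hAnm (measure_ne_top ν A), hνuniv, hνA, tsub_self]
  have haeA : ∀ᵐ z ∂ν, z ∈ A := by
    rw [MeasureTheory.ae_iff]
    exact hνAc
  -- a.e., F' z ∈ V
  have haeV : ∀ᵐ z ∂ν, F' z ∈ V := by
    filter_upwards [haeA, hGeq] with z hzA hzG
    have : F' z = f z.1 := by funext y; rw [hF']; exact (hzG y).symm
    rw [this, hmemV]
    exact ⟨⟨z.1, rfl⟩, hzA⟩
  -- weights
  set w : (Y → ℝ) → ℝ := fun v => (ν (S v)).toReal with hw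
  have hwnn : ∀ v ∈ V, 0 ≤ w v := fun v _ => ENNReal.toReal_nonneg
  have hdisj : (V : Set (Y → ℝ)).PairwiseDisjoint S := by
    intro v _ u _ hvu
    simp only [Function.onFun, Set.disjoint_left]
    intro z hzv hzu
    exact hvu (hzv.symm.trans hzu)
  have hwsum : ∑ v ∈ V, w v = 1 := by
    have hU : ν (⋃ v ∈ V, S v) = 1 := by
      refine le_antisymm prob_le_one ?_
      rw [← hνuniv]
      apply measure_mono_ae
      filter_upwards [haeV] with z hz _
      exact Set.mem_biUnion hz rfl
    have hsum : ∑ v ∈ V, ν (S v) = 1 := by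
      rw [← measure_biUnion_finset hdisj (fun v _ => hSmeas v), hU]
    rw [hw, ← ENNReal.toReal_sum (fun v _ => measure_ne_top ν _), hsum, ENNReal.toReal_one]
  -- decomposition of p
  have hpdecomp : ∀ y, p y = ∑ v ∈ V, w v * v y := by
    intro y
    rw [hc y]
    have h1 : ∫ z, g y z ∂ν = ∫ z, (∑ v ∈ V, Set.indicator (S v) (fun _ => v y) z) ∂ν := by
      apply integral_congr_ae
      filter_upwards [hGeq, haeV] with z hzG hzV
      have hgF : g y z = F' z y := hzG y
      have : ∀ v ∈ V, Set.indicator (S v) (fun _ => v y) z =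
          if F' z = v then v y else 0 := by
        intro v _
        simp [Set.indicator_apply, hS, Set.mem_setOf_eq]
      rw [Finset.sum_congr rfl this]
      have := Finset.sum_ite_eq' V (F' z) (fun v => v y)
      simp only [hzV, if_true] at this
      rw [hgF]
      rw [← this]
      apply Finset.sum_congr rfl
      intro v _
      by_cases h : F' z = v
      · simp [h]
      · rw [if_neg h, if_neg (fun h' => h (h'.symm))]
    rw [h1, integral_finset_sum]
    · apply Finset.sum_congr rfl
      intro v _
      rw [integral_indicator_const (v y) (hSmeas v)]
      simp [hw, smul_eq_mul, Measure.real]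
    · intro v _
      exact (integrable_const (v y)).indicator (hSmeas v)
  -- conclude by convexity
  have hmem : (∑ v ∈ V, w v • v) ∈ {q | q ∈ stdSimplex ℝ Y ∧ Γ q = γ} := by
    apply Convex.sum_mem (hconv γ) hwnn hwsum
    intro v hv
    obtain ⟨⟨x, hx⟩, hΓv⟩ := (hmemV v).mp hv
    exact ⟨hx ▸ hf x, hΓv⟩
  have hpeq : p = ∑ v ∈ V, w v • v := by
    funext y
    rw [hpdecomp y]
    simp [Finset.sum_apply, Pi.smul_apply, smul_eq_mul]
  have : Γ p = γ := by rw [hpeq]; exact hmem.2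
  exact this
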